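/- Let N ≥ 2 be an integer and let p, μ, m be real numbers with 1 < p < N, 0 ≤ μ < μ̄ := ((N−p)/p)^p and m > 0. Let f : ℝ → ℝ be continuous and satisfy (F0). Let u : (0,∞) → ℝ be a radial profile solution of the equation (hypothesis (S)) such that u(r) → 0 as r → ∞. Then u'(r)/u(r) → −(m/(p−1))^{1/p} as r → ∞. -/

import Mathlib

open Filter Topology Set

lemma barrier_le (F F' : ℝ → ℝ) (r₀ Y : ℝ)
    (hd : ∀ r, r₀ ≤ r → HasDerivAt F (F' r) r)
    (h0 : F r₀ ≤ Y)
    (hneg : ∀ r, r₀ ≤ r → F r ≤ Y → F' r < 0) :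
    ∀ r, r₀ ≤ r → F r ≤ Y := by
  intro r₁ hr₁
  set s : Set ℝ := {t | F t ≤ Y} with hs
  have key : Icc r₀ r₁ ⊆ s := by
    apply IsClosed.Icc_subset_of_forall_exists_gt
    · have hcont : ContinuousOn F (Icc r₀ r₁) := fun x hx =>
        ((hd x hx.1).continuousAt).continuousWithinAt
      have : s ∩ Icc r₀ r₁ = Icc r₀ r₁ ∩ F ⁻¹' (Iic Y) := by
        ext t; simp [hs, and_comm]
      rw [this]
      exact hcont.preimage_isClosed_of_isClosed isClosed_Icc isClosed_Iic
    · exact h0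
    · intro x hx y hy
      have hx0 : r₀ ≤ x := hx.2.1
      have hFx : F x ≤ Y := hx.1
      have hDneg := hneg x hx0 hFx
      have hslope : Tendsto (slope F x) (𝓝[≠] x) (𝓝 (F' x)) :=
        hasDerivAt_iff_tendsto_slope.1 (hd x hx0)
      have h1 : ∀ᶠ t in 𝓝[>] x, slope F x t < 0 :=
        (hslope.eventually (Iio_mem_nhds hDneg)).filter_mono
          (nhdsWithin_mono x fun t ht => ne_of_gt ht)
      have h2 : ∀ᶠ t in 𝓝[>] x, t ∈ Ioc x y :=
        eventually_of_mem (Ioc_mem_nhdsGT hy) fun _ h => h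
      obtain ⟨t, ht1, ht2⟩ := (h1.and h2).exists
      refine ⟨t, ?_, ht2⟩
      have hxt : x < t := ht2.1
      have hsl : (F t - F x) / (t - x) < 0 := by rwa [slope_def_field] at ht1
      have : F t - F x < 0 := by
        rcases div_neg_iff.mp hsl with ⟨_, h⟩ | ⟨h, _⟩
        · linarith
        · exact h
      show F t ≤ Y
      linarith
  exact key ⟨hr₁, le_refl r₁⟩

lemma decay_false (F F' : ℝ → ℝ) (r₀ Y c : ℝ) (hc : 0 < c)
    (hd : ∀ r, r₀ ≤ r → HasDerivAt F (F' r) r)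
    (h0 : F r₀ ≤ Y)
    (hstep : ∀ r, r₀ ≤ r → F r ≤ Y → F' r ≤ -c)
    (hpos : ∀ r, r₀ ≤ r → 0 < F r) : False := by
  have hinv : ∀ r, r₀ ≤ r → F r ≤ Y :=
    barrier_le F F' r₀ Y hd h0 (fun r hr hF => lt_of_le_of_lt (hstep r hr hF) (by linarith))
  have hGd : ∀ r ∈ Ici r₀, HasDerivAt (fun t => F t + c * t) (F' r + c) r := by
    intro r hr
    have h1 : HasDerivAt (fun t : ℝ => c * t) c r := by
      simpa using (hasDerivAt_id r).const_mul c
    exact (hd r hr).add h1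
  have hanti : AntitoneOn (fun t => F t + c * t) (Ici r₀) := by
    apply antitoneOn_of_deriv_nonpos (convex_Ici r₀)
    · exact fun r hr => (hGd r hr).continuousAt.continuousWithinAt
    · intro x hx
      rw [interior_Ici] at hx
      exact (hGd x (mem_Ici.2 (le_of_lt hx))).differentiableAt.differentiableWithinAt
    · intro x hx
      rw [interior_Ici] at hx
      rw [(hGd x (mem_Ici.2 (le_of_lt hx))).deriv]
      have := hstep x hx.le (hinv x hx.le)
      linarith
  have hF0pos : 0 < F r₀ := hpos r₀ le_rfl
  set r₁ := r₀ + (F r₀ + 1) / c with hr₁def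
  have hq : 0 < (F r₀ + 1) / c := by positivity
  have hr₁ : r₀ ≤ r₁ := by rw [hr₁def]; linarith
  have := hanti (self_mem_Ici) hr₁ hr₁
  have hcr : c * r₁ = c * r₀ + (F r₀ + 1) := by
    rw [hr₁def]; field_simp
  have hF1 : F r₁ ≤ -1 := by
    simp only at this
    linarith
  linarith [hpos r₁ hr₁]

set_option maxHeartbeats 2000000 in
theorem stmt_10
    (N : ℕ) (hN : 2 ≤ N) (p μ m : ℝ)
    (hp1 : 1 < p) (hpN : p < N)
    (hμ0 : 0 ≤ μ) (hμ : μ < (((N : ℝ) - p) / p) ^ p)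
    (hm : 0 < m)
    (f : ℝ → ℝ) (hf : Continuous f)
    (hF0 : ∃ A > (0:ℝ), ∃ q > p, ∃ t₀ > (0:ℝ),
      ∀ t : ℝ, |t| ≤ t₀ → |f t| ≤ A * |t| ^ (q - 1))
    (u u' : ℝ → ℝ)
    (hu_pos : ∀ r : ℝ, 0 < r → 0 < u r)
    (hu' : ∀ r : ℝ, 0 < r → HasDerivAt u (u' r) r)
    (hS : ∀ r : ℝ, 0 < r →
      HasDerivAt (fun s : ℝ => s ^ ((N : ℝ) - 1) * |u' s| ^ (p - 2) * u' s)
        (-(r ^ ((N : ℝ) - 1) *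
          (μ / r ^ p * u r ^ (p - 1) - m * u r ^ (p - 1) + f (u r)))) r)
    (hu0 : Tendsto u atTop (𝓝 0)) :
    Tendsto (fun r : ℝ => u' r / u r) atTop (𝓝 (-(m / (p - 1)) ^ ((1 : ℝ) / p))) := by
  have hp0 : 0 < p := by linarith
  have hp1' : 0 < p - 1 := by linarith
  have hN2 : (2:ℝ) ≤ (N:ℝ) := by exact_mod_cast hN
  have he0 : 0 < (N:ℝ) - 1 := by linarith
  -- eventual smallness bounds
  have hbound : ∀ ε : ℝ, 0 < ε → ∃ R : ℝ, 1 ≤ R ∧ ∀ r, R ≤ r →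
      0 < r ∧ 0 < u r ∧ μ / r ^ p ≤ ε ∧ |f (u r)| ≤ ε * u r ^ (p - 1) := by
    intro ε hε
    obtain ⟨A, hA, q, hq, t₀, ht₀, hF⟩ := hF0
    set δ : ℝ := min t₀ (min 1 ((ε / A) ^ (1 / (q - p)))) with hδdef
    have hqp : 0 < q - p := by linarith
    have hδ0 : 0 < δ := lt_min ht₀ (lt_min one_pos (Real.rpow_pos_of_pos (by positivity) _))
    have hev : ∀ᶠ r in atTop, |u r| < δ := by
      have h1 : Tendsto (fun r => |u r|) atTop (𝓝 0) := by simpa using hu0.abs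
      exact h1.eventually (Iio_mem_nhds hδ0)
    obtain ⟨R₁, hR₁⟩ := eventually_atTop.1 hev
    refine ⟨max 1 (max R₁ ((μ / ε + 1) ^ (1 / p))), le_max_left _ _, ?_⟩
    intro r hr
    have hr1 : (1:ℝ) ≤ r := le_trans (le_max_left _ _) hr
    have hr0 : 0 < r := by linarith
    have hur : 0 < u r := hu_pos r hr0
    have huδ : u r ≤ δ := by
      have h2 := hR₁ r (le_trans (le_trans (le_max_left _ _) (le_max_right 1 _)) hr)
      rw [abs_of_pos hur] at h2; exact h2.le
    refine ⟨hr0, hur, ?_, ?_⟩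
    · have h1 : ((μ / ε + 1) ^ (1 / p) : ℝ) ≤ r :=
        le_trans (le_trans (le_max_right _ _) (le_max_right 1 _)) hr
      have h2 : μ / ε + 1 ≤ r ^ p := by
        have h3 : ((μ / ε + 1) ^ (1 / p) : ℝ) ^ p ≤ r ^ p :=
          Real.rpow_le_rpow (Real.rpow_nonneg (by positivity) _) h1 (by linarith)
        rwa [← Real.rpow_mul (by positivity), one_div,
          inv_mul_cancel₀ (by linarith : p ≠ 0), Real.rpow_one] at h3
      have hrp : 0 < r ^ p := Real.rpow_pos_of_pos hr0 _
      rw [div_le_iff₀ hrp]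
      have h4 : ε * (μ / ε + 1) ≤ ε * r ^ p := mul_le_mul_of_nonneg_left h2 hε.le
      have h5 : ε * (μ / ε + 1) = μ + ε := by field_simp
      linarith
    · have h1 : |f (u r)| ≤ A * |u r| ^ (q - 1) :=
        hF _ (by rw [abs_of_pos hur]; exact le_trans huδ (min_le_left _ _))
      rw [abs_of_pos hur] at h1
      have hsplit : u r ^ (q - 1) = u r ^ (q - p) * u r ^ (p - 1) := by
        rw [← Real.rpow_add hur, show q - p + (p - 1) = q - 1 from by ring]
      have h2 : u r ^ (q - p) ≤ ε / A := by
        have h3 : u r ^ (q - p) ≤ ((ε / A) ^ (1 / (q - p))) ^ (q - p) :=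
          Real.rpow_le_rpow hur.le
            (le_trans huδ (le_trans (min_le_right _ _) (min_le_right _ _))) hqp.le
        rwa [← Real.rpow_mul (by positivity), one_div, inv_mul_cancel₀ hqp.ne',
          Real.rpow_one] at h3
      have hU : 0 ≤ u r ^ (p - 1) := Real.rpow_nonneg hur.le _
      calc |f (u r)| ≤ A * (u r ^ (q - p) * u r ^ (p - 1)) := by rw [← hsplit]; exact h1
        _ ≤ A * (ε / A * u r ^ (p - 1)) :=
            mul_le_mul_of_nonneg_left (mul_le_mul_of_nonneg_right h2 hU) hA.le
        _ = ε * u r ^ (p - 1) := by field_simp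
  -- Step 0 : eventual negativity of u'
  obtain ⟨R₀, hR₀1, hR₀⟩ := hbound (m / 4) (by positivity)
  have hu'neg : ∀ r, R₀ ≤ r → u' r < 0 := by
    set gfun : ℝ → ℝ := fun s : ℝ => s ^ ((N : ℝ) - 1) * |u' s| ^ (p - 2) * u' s with hgdef
    have hgmono : StrictMonoOn gfun (Ici R₀) := by
      apply strictMonoOn_of_deriv_pos (convex_Ici R₀)
      · exact fun x hx => (hS x (hR₀ x hx).1).continuousAt.continuousWithinAt
      · intro x hx
        rw [interior_Ici] at hx
        obtain ⟨hx0, hux, hμx, hfx⟩ := hR₀ x hx.le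
        rw [(hS x hx0).deriv]
        have hU : 0 < u x ^ (p - 1) := Real.rpow_pos_of_pos hux _
        have hfle : f (u x) ≤ m / 4 * u x ^ (p - 1) := le_trans (le_abs_self _) hfx
        have hμle : μ / x ^ p * u x ^ (p - 1) ≤ m / 4 * u x ^ (p - 1) :=
          mul_le_mul_of_nonneg_right hμx hU.le
        have hH : μ / x ^ p * u x ^ (p - 1) - m * u x ^ (p - 1) + f (u x) < 0 := by nlinarith
        have hxe : 0 < x ^ ((N : ℝ) - 1) := Real.rpow_pos_of_pos hx0 _
        nlinarith [mul_pos hxe (neg_pos.2 hH)]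
    have hgneg : ∀ r, R₀ ≤ r → gfun r < 0 := by
      intro r hr
      by_contra hcon
      push_neg at hcon
      have hr0 : 0 < r := (hR₀ r hr).1
      have hu'pos : ∀ s, r < s → 0 < u' s := by
        intro s hs
        have hs0 : 0 < s := lt_trans hr0 hs
        have hgs : 0 < gfun s :=
          lt_of_le_of_lt hcon (hgmono hr (le_trans hr hs.le) hs)
        by_contra h
        push_neg at h
        have : gfun s ≤ 0 :=
          mul_nonpos_of_nonneg_of_nonpos
            (mul_nonneg (Real.rpow_nonneg hs0.le _) (Real.rpow_nonneg (abs_nonneg _) _)) h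
        linarith
      have humono : StrictMonoOn u (Ici (r + 1)) := by
        apply strictMonoOn_of_deriv_pos (convex_Ici (r + 1))
        · exact fun x hx =>
            (hu' x (by simp only [mem_Ici] at hx; linarith)).continuousAt.continuousWithinAt
        · intro x hx
          rw [interior_Ici] at hx
          rw [(hu' x (by simp only [mem_Ioi] at hx; linarith)).deriv]
          exact hu'pos x (by simp only [mem_Ioi] at hx; linarith)
      have hup2 : 0 < u (r + 1) := hu_pos _ (by linarith)
      have hev : ∀ᶠ s in atTop, u s < u (r + 1) := hu0.eventually (Iio_mem_nhds hup2)
      obtain ⟨R₂, hR₂⟩ := eventually_atTop.1 hev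
      set s := max R₂ (r + 2) with hsdef
      have hs1 : u s < u (r + 1) := hR₂ s (le_max_left _ _)
      have hs2 : u (r + 1) < u s := by
        apply humono (self_mem_Ici) _ _
        · simp only [mem_Ici]; linarith [le_max_right R₂ (r + 2)]
        · linarith [le_max_right R₂ (r + 2)]
      linarith
    intro r hr
    by_contra h
    push_neg at h
    have : 0 ≤ gfun r :=
      mul_nonneg (mul_nonneg (Real.rpow_nonneg (hR₀ r hr).1.le _)
        (Real.rpow_nonneg (abs_nonneg _) _)) h
    exact absurd (hgneg r hr) (not_lt.2 this)
  -- the logarithmic-derivative power function z and its derivative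
  set z : ℝ → ℝ := fun s => (-(u' s) / u s) ^ (p - 1) with hzdef
  set Z' : ℝ → ℝ := fun s =>
    (p - 1) * ((-(u' s) / u s) ^ (p - 1)) * (-(u' s) / u s)
      - ((N:ℝ) - 1) * ((-(u' s) / u s) ^ (p - 1)) / s
      - m + (μ / s ^ p + f (u s) / u s ^ (p - 1)) with hZ'def
  have hz : ∀ r, R₀ < r → HasDerivAt z (Z' r) r := by
    intro r hr
    have hr0 : 0 < r := lt_of_lt_of_le (by linarith) hr.le
    have hur : 0 < u r := hu_pos r hr0
    have hu'r : u' r < 0 := hu'neg r hr.le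
    have hW : 0 < -(u' r) := neg_pos.2 hu'r
    have hDu : HasDerivAt (fun s => u s ^ (p - 1))
        (u' r * ((p - 1) * u r ^ (p - 1 - 1))) r := by
      have := (hu' r hr0).rpow_const (p := p - 1) (Or.inl hur.ne')
      convert this using 1
      ring
    have hDr : HasDerivAt (fun s : ℝ => s ^ ((N:ℝ) - 1))
        (((N:ℝ) - 1) * r ^ ((N:ℝ) - 1 - 1)) r :=
      Real.hasDerivAt_rpow_const (Or.inl hr0.ne')
    have hD : HasDerivAt (fun s => s ^ ((N:ℝ) - 1) * u s ^ (p - 1))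
        (((N:ℝ) - 1) * r ^ ((N:ℝ) - 1 - 1) * u r ^ (p - 1)
          + r ^ ((N:ℝ) - 1) * (u' r * ((p - 1) * u r ^ (p - 1 - 1)))) r := hDr.mul hDu
    have hPpos : 0 < r ^ ((N:ℝ) - 1) := Real.rpow_pos_of_pos hr0 _
    have hUpos : 0 < u r ^ (p - 1) := Real.rpow_pos_of_pos hur _
    have hDne : r ^ ((N:ℝ) - 1) * u r ^ (p - 1) ≠ 0 := by positivity
    have hgd := hS r hr0
    have hq := (hgd.neg).div hD hDne
    have heq : z =ᶠ[𝓝 r]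
        (fun s => -(s ^ ((N:ℝ) - 1) * |u' s| ^ (p - 2) * u' s)
          / (s ^ ((N:ℝ) - 1) * u s ^ (p - 1))) := by
      filter_upwards [Ioi_mem_nhds hr] with s hs
      have hs0 : 0 < s := lt_of_lt_of_le (by linarith) (le_of_lt hs)
      have hus : 0 < u s := hu_pos s hs0
      have hu's : u' s < 0 := hu'neg s hs.le
      have hWs : 0 < -(u' s) := neg_pos.2 hu's
      have habs : |u' s| = -(u' s) := abs_of_neg hu's
      have h1 : (-(u' s)) ^ (p - 2) * u' s = -((-(u' s)) ^ (p - 1)) := by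
        have h2 := Real.rpow_add_one (ne_of_gt hWs) (p - 2)
        rw [show p - 2 + 1 = p - 1 from by ring] at h2
        rw [h2]; ring
      have hPs : (0:ℝ) < s ^ ((N:ℝ) - 1) := Real.rpow_pos_of_pos hs0 _
      have hUs : (0:ℝ) < u s ^ (p - 1) := Real.rpow_pos_of_pos hus _
      simp only [hzdef]
      rw [habs, Real.div_rpow hWs.le hus.le, mul_assoc, h1]
      field_simp
    refine (hq.congr_of_eventuallyEq heq).congr_deriv ?_
    have habs : |u' r| = -(u' r) := abs_of_neg hu'r
    have h1 : (-(u' r)) ^ (p - 2) * u' r = -((-(u' r)) ^ (p - 1)) := by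
      have h2 := Real.rpow_add_one (ne_of_gt hW) (p - 2)
      rw [show p - 2 + 1 = p - 1 from by ring] at h2
      rw [h2]; ring
    have hWU : (-(u' r)) ^ (p - 1) = (-(u' r) / u r) ^ (p - 1) * u r ^ (p - 1) := by
      rw [Real.div_rpow hW.le hur.le]
      field_simp
    have hre : r ^ ((N:ℝ) - 1 - 1) = r ^ ((N:ℝ) - 1) / r := by
      rw [Real.rpow_sub_one hr0.ne']
    have hup : u r ^ (p - 1 - 1) = u r ^ (p - 1) / u r := by
      rw [Real.rpow_sub_one hur.ne']
    have hrp : (0:ℝ) < r ^ p := Real.rpow_pos_of_pos hr0 _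
    simp only [hZ'def, Pi.neg_apply]
    rw [habs, mul_assoc, h1, hre, hup, hWU]
    field_simp
    ring
  -- the limit constant
  set lam : ℝ := (m / (p - 1)) ^ ((1:ℝ) / p) with hlamdef
  have hlam0 : 0 < lam := Real.rpow_pos_of_pos (by positivity) _
  have hlamp : lam ^ p = m / (p - 1) := by
    rw [hlamdef, ← Real.rpow_mul (by positivity), one_div,
      inv_mul_cancel₀ (by linarith : p ≠ 0), Real.rpow_one]
  suffices hvv : Tendsto (fun r => -(u' r) / u r) atTop (𝓝 lam) by
    have h2 := hvv.neg
    simp only [neg_div, neg_neg] at h2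
    exact h2
  rw [tendsto_order]
  constructor
  · -- lower bound
    intro a ha
    rcases le_or_gt a 0 with ha0 | ha0
    · filter_upwards [eventually_ge_atTop R₀] with r hrge
      have hr0 : 0 < r := lt_of_lt_of_le (by linarith) hrge
      have := div_pos (neg_pos.2 (hu'neg r hrge)) (hu_pos r hr0)
      linarith
    · have hap : a ^ p < m / (p - 1) := by
        have h1 : a ^ p < lam ^ p := Real.rpow_lt_rpow ha0.le ha hp0
        rwa [hlamp] at h1
      have hap' : (p - 1) * a ^ p < m := by
        have := (lt_div_iff₀ hp1').mp hap
        linarith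
      set c := (m - (p - 1) * a ^ p) / 4 with hcdef
      have hc0 : 0 < c := by rw [hcdef]; linarith
      obtain ⟨R, hR1, hR⟩ := hbound c hc0
      rw [eventually_atTop]
      refine ⟨max R (R₀ + 1), ?_⟩
      intro r₂ hr₂
      by_contra hcon
      push_neg at hcon
      have hr₂R : R ≤ r₂ := le_trans (le_max_left _ _) hr₂
      have hr₂0 : R₀ + 1 ≤ r₂ := le_trans (le_max_right _ _) hr₂
      have hv₂ : 0 ≤ -(u' r₂) / u r₂ :=
        (div_pos (neg_pos.2 (hu'neg r₂ (by linarith))) (hu_pos r₂ (by linarith))).le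
      refine decay_false z Z' r₂ (a ^ (p - 1)) c hc0 ?_ ?_ ?_ ?_
      · intro r hrr
        exact hz r (by linarith)
      · simp only [hzdef]
        exact Real.rpow_le_rpow hv₂ hcon (by linarith)
      · intro r hrr hFY
        have hrR₀ : R₀ + 1 ≤ r := by linarith
        have hr0 : 0 < r := by linarith
        have hur : 0 < u r := hu_pos r hr0
        have hu'r : u' r < 0 := hu'neg r (by linarith)
        have hv0 : 0 < -(u' r) / u r := div_pos (neg_pos.2 hu'r) hur
        obtain ⟨_, _, hμr, hfr⟩ := hR r (by linarith)
        have hFY' : (-(u' r) / u r) ^ (p - 1) ≤ a ^ (p - 1) := by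
          simpa only [hzdef] using hFY
        have hvva : -(u' r) / u r ≤ a := by
          by_contra hgt
          push_neg at hgt
          have := Real.rpow_lt_rpow ha0.le hgt hp1'
          linarith
        have hU : 0 < u r ^ (p - 1) := Real.rpow_pos_of_pos hur _
        have h1 : (-(u' r) / u r) ^ (p - 1) * (-(u' r) / u r) ≤ a ^ (p - 1) * a :=
          mul_le_mul hFY' hvva hv0.le (Real.rpow_nonneg ha0.le _)
        have hap2 : a ^ (p - 1) * a = a ^ p := by
          rw [← Real.rpow_add_one (ne_of_gt ha0), show p - 1 + 1 = p from by ring]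
        have hterm : 0 ≤ ((N:ℝ) - 1) * ((-(u' r) / u r) ^ (p - 1)) / r := by
          have := Real.rpow_nonneg hv0.le (p - 1)
          positivity
        have hfU : f (u r) / u r ^ (p - 1) ≤ c := by
          rw [div_le_iff₀ hU]
          exact le_trans (le_abs_self _) hfr
        have h2 : (p - 1) * ((-(u' r) / u r) ^ (p - 1) * (-(u' r) / u r))
            ≤ (p - 1) * (a ^ (p - 1) * a) := mul_le_mul_of_nonneg_left h1 hp1'.le
        simp only [hZ'def]
        rw [hap2] at h2
        have hcd : c = (m - (p - 1) * a ^ p) / 4 := hcdef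
        linarith [h2, hterm, hμr, hfU]
      · intro r hrr
        exact Real.rpow_pos_of_pos
          (div_pos (neg_pos.2 (hu'neg r (by linarith))) (hu_pos r (by linarith))) _
  · -- upper bound
    intro b hb
    have hb0 : 0 < b := lt_trans hlam0 hb
    have hbp : m / (p - 1) < b ^ p := by
      have h1 : lam ^ p < b ^ p := Real.rpow_lt_rpow hlam0.le hb hp0
      rwa [hlamp] at h1
    have hbp0 : 0 < b ^ p := Real.rpow_pos_of_pos hb0 _
    have him : m / (p - 1) / b ^ p < 1 := (div_lt_one hbp0).2 hbp
    set c := (1 - m / (p - 1) / b ^ p) / 4 with hcdef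
    have hc0 : 0 < c := by rw [hcdef]; linarith
    have hc14 : c ≤ 1 / 4 := by
      rw [hcdef]
      have : 0 < m / (p - 1) / b ^ p := by positivity
      linarith
    set ε := c * (p - 1) * b ^ p with hεdef
    have hε0 : 0 < ε := by
      rw [hεdef]; exact mul_pos (mul_pos hc0 hp1') hbp0
    have hmID : m = (1 - 4 * c) * (p - 1) * b ^ p := by
      rw [hcdef]; field_simp; ring
    obtain ⟨R, hR1, hR⟩ := hbound ε hε0
    rw [eventually_atTop]
    refine ⟨max R (max (R₀ + 1) (((N:ℝ) - 1) / ((p - 1) * b * c))), ?_⟩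
    intro r₂ hr₂
    by_contra hcon
    push_neg at hcon
    have hrR : R ≤ r₂ := le_trans (le_max_left _ _) hr₂
    have hr01 : R₀ + 1 ≤ r₂ := le_trans (le_trans (le_max_left _ _) (le_max_right _ _)) hr₂
    have hrC : ((N:ℝ) - 1) / ((p - 1) * b * c) ≤ r₂ :=
      le_trans (le_trans (le_max_right _ _) (le_max_right _ _)) hr₂
    have hyeq : ∀ r, R₀ < r → (z r) ^ (-(p - 1)⁻¹ : ℝ) = (-(u' r) / u r)⁻¹ := by
      intro r hrr
      have hr0 : 0 < r := by linarith
      have hv0 : 0 < -(u' r) / u r := div_pos (neg_pos.2 (hu'neg r hrr.le)) (hu_pos r hr0)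
      simp only [hzdef]
      rw [← Real.rpow_mul hv0.le,
        show (p - 1) * (-(p - 1)⁻¹) = -1 from by
          rw [mul_neg, mul_inv_cancel₀ hp1'.ne'],
        Real.rpow_neg_one]
    have hv₂ : 0 < -(u' r₂) / u r₂ :=
      div_pos (neg_pos.2 (hu'neg r₂ (by linarith))) (hu_pos r₂ (by linarith))
    refine decay_false (fun s => (z s) ^ (-(p - 1)⁻¹ : ℝ))
      (fun s => Z' s * -(p - 1)⁻¹ * (z s) ^ (-(p - 1)⁻¹ - 1 : ℝ)) r₂ b⁻¹ c hc0 ?_ ?_ ?_ ?_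
    · intro r hrr
      have hrr0 : R₀ < r := by linarith
      have hzne : z r ≠ 0 := by
        have hr0 : 0 < r := by linarith
        have hv0 : 0 < -(u' r) / u r := div_pos (neg_pos.2 (hu'neg r hrr0.le)) (hu_pos r hr0)
        simp only [hzdef]
        exact (Real.rpow_pos_of_pos hv0 _).ne'
      exact (hz r hrr0).rpow_const (Or.inl hzne)
    · show z r₂ ^ (-(p - 1)⁻¹ : ℝ) ≤ b⁻¹
      rw [hyeq r₂ (by linarith)]
      exact inv_anti₀ hb0 hcon
    · intro r hrr hY
      have hrr0 : R₀ < r := by linarith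
      have hr0 : 0 < r := by linarith
      have hur : 0 < u r := hu_pos r hr0
      have hu'r : u' r < 0 := hu'neg r hrr0.le
      have hv0 : 0 < -(u' r) / u r := div_pos (neg_pos.2 hu'r) hur
      have hY2 : (-(u' r) / u r)⁻¹ ≤ b⁻¹ := by
        rw [← hyeq r hrr0]; exact hY
      have hbV : b ≤ -(u' r) / u r := by
        rwa [inv_le_inv₀ hv0 hb0] at hY2
      obtain ⟨_, _, hμr, hfr⟩ := hR r (by linarith)
      have hU : 0 < u r ^ (p - 1) := Real.rpow_pos_of_pos hur _
      have hVP : 0 < (-(u' r) / u r) ^ p := Real.rpow_pos_of_pos hv0 _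
      have hzv : (-(u' r) / u r) ^ (p - 1) = (-(u' r) / u r) ^ p / (-(u' r) / u r) :=
        Real.rpow_sub_one hv0.ne' p
      have hzVV : (-(u' r) / u r) ^ (p - 1) * (-(u' r) / u r) = (-(u' r) / u r) ^ p := by
        rw [← Real.rpow_add_one hv0.ne', show p - 1 + 1 = p from by ring]
      have hzpow : ((z r : ℝ)) ^ (-(p - 1)⁻¹ - 1 : ℝ) = ((-(u' r) / u r) ^ p)⁻¹ := by
        simp only [hzdef]
        rw [← Real.rpow_mul hv0.le,
          show (p - 1) * (-(p - 1)⁻¹ - 1) = -p from by field_simp; ring,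
          Real.rpow_neg hv0.le]
      have hmid : ((N:ℝ) - 1) * ((-(u' r) / u r) ^ (p - 1)) / r
          ≤ c * (p - 1) * (-(u' r) / u r) ^ p := by
        have h1 : (-(u' r) / u r) ^ (p - 1) ≤ (-(u' r) / u r) ^ p / b := by
          rw [hzv]
          exact div_le_div_of_nonneg_left hVP.le hb0 hbV
        have h2 : ((N:ℝ) - 1) ≤ r * ((p - 1) * b * c) := by
          have hpbc : 0 < (p - 1) * b * c := by positivity
          exact (div_le_iff₀ hpbc).mp (le_trans hrC hrr)
        calc ((N:ℝ) - 1) * ((-(u' r) / u r) ^ (p - 1)) / r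
            ≤ (r * ((p - 1) * b * c)) * ((-(u' r) / u r) ^ p / b) / r := by
              apply (div_le_div_iff_of_pos_right hr0).2
              exact mul_le_mul h2 h1 (Real.rpow_nonneg hv0.le _) (by positivity)
          _ = c * (p - 1) * (-(u' r) / u r) ^ p := by field_simp
      have hEl : -ε ≤ μ / r ^ p + f (u r) / u r ^ (p - 1) := by
        have hμge : 0 ≤ μ / r ^ p := by positivity
        have hfl : -(ε * u r ^ (p - 1)) ≤ f (u r) := (abs_le.1 hfr).1
        have hfd : -ε ≤ f (u r) / u r ^ (p - 1) := by
          rw [le_div_iff₀ hU]; linarith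
        linarith
      have hVPb : b ^ p ≤ (-(u' r) / u r) ^ p := Real.rpow_le_rpow hb0.le hbV hp0.le
      have hlow : c * ((p - 1) * (-(u' r) / u r) ^ p) ≤ Z' r := by
        have hrew : (p - 1) * ((-(u' r) / u r) ^ (p - 1)) * (-(u' r) / u r)
            = (p - 1) * ((-(u' r) / u r) ^ p) := by
          rw [mul_assoc, hzVV]
        have hkey : (1 - 2 * c) * ((p - 1) * b ^ p)
            ≤ (1 - 2 * c) * ((p - 1) * ((-(u' r) / u r) ^ p)) :=
          mul_le_mul_of_nonneg_left (mul_le_mul_of_nonneg_left hVPb hp1'.le) (by linarith)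
        simp only [hZ'def]
        rw [hrew]
        linarith [hmid, hEl, hkey, hε0]
      show Z' r * -(p - 1)⁻¹ * z r ^ (-(p - 1)⁻¹ - 1 : ℝ) ≤ -c
      rw [hzpow]
      have h9 : c * ((p - 1) * (-(u' r) / u r) ^ p) * ((p - 1)⁻¹ * ((-(u' r) / u r) ^ p)⁻¹)
          ≤ Z' r * ((p - 1)⁻¹ * ((-(u' r) / u r) ^ p)⁻¹) :=
        mul_le_mul_of_nonneg_right hlow (by positivity)
      have h10 : c * ((p - 1) * (-(u' r) / u r) ^ p) * ((p - 1)⁻¹ * ((-(u' r) / u r) ^ p)⁻¹)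
          = c := by
        field_simp
        exact div_self (by rw [← neg_div]; exact hVP.ne')
      have h11 : Z' r * -(p - 1)⁻¹ * ((-(u' r) / u r) ^ p)⁻¹
          = -(Z' r * ((p - 1)⁻¹ * ((-(u' r) / u r) ^ p)⁻¹)) := by ring
      rw [h11]
      linarith [h9, h10]
    · intro r hrr
      have hrr0 : R₀ < r := by linarith
      have hr0 : 0 < r := by linarith
      have hv0 : 0 < -(u' r) / u r := div_pos (neg_pos.2 (hu'neg r hrr0.le)) (hu_pos r hr0)
      exact Real.rpow_pos_of_pos (Real.rpow_pos_of_pos hv0 _) _
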